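/- Let c : [0,T] → [0,+∞) be continuously differentiable with c(0) possibly zero, and suppose there is a constant K such that |c'(t)| ≤ K·c(t)^{1 - 1/(1+α)} for all t ∈ [0,T], where α ∈ (0,1]. Given ε > 0, define γ(t) := ψ_ε(c(t) - ε) with ψ_ε as above. Then γ is C¹, 0 ≤ γ(t) ≤ c(t), |c(t) - γ(t)| ≤ 2ε for all t, and |γ'(t)| ≤ K·c(t)·ε^{-1/(1+α)} for all t ∈ [0,T]. -/

import Mathlib

open Real

theorem stmt1 (T α ε K : ℝ) (hT : 0 < T) (hα : α ∈ Set.Ioc (0:ℝ) 1) (hε : 0 < ε)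
    (c : ℝ → ℝ) (hc1 : ContDiffOn ℝ 1 c (Set.Icc 0 T))
    (hc0 : ∀ t ∈ Set.Icc (0:ℝ) T, 0 ≤ c t)
    (hK : ∀ t ∈ Set.Icc (0:ℝ) T, |deriv c t| ≤ K * (c t) ^ (1 - 1/(1+α)))
    (ψ : ℝ → ℝ)
    (hψ0 : ∀ x ≤ (0:ℝ), ψ x = 0)
    (hψ1 : ∀ x ≥ (0:ℝ), ψ x = x - (2 / π) * ε * Real.arctan (π / 2 * (x / ε)))
    (γ : ℝ → ℝ) (hγ : ∀ t, γ t = ψ (c t - ε)) :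
    ContDiffOn ℝ 1 γ (Set.Icc 0 T) ∧
    (∀ t ∈ Set.Icc (0:ℝ) T, 0 ≤ γ t ∧ γ t ≤ c t) ∧
    (∀ t ∈ Set.Icc (0:ℝ) T, |c t - γ t| ≤ 2 * ε) ∧
    (∀ t ∈ Set.Icc (0:ℝ) T, |deriv γ t| ≤ K * c t * ε ^ (-(1/(1+α)))) := by
  obtain ⟨hα0, hα1⟩ := hα
  have hπ : (0:ℝ) < π := Real.pi_pos
  have hεne : ε ≠ 0 := hε.ne'
  set δ : ℝ := 1/(1+α) with hδdef
  have h1α : (0:ℝ) < 1 + α := by linarith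
  have hδpos : 0 < δ := by rw [hδdef]; positivity
  have hδlt : δ < 1 := by rw [hδdef, div_lt_one h1α]; linarith
  set β : ℝ := 1 - δ with hβdef
  have hβpos : 0 < β := by rw [hβdef]; linarith
  -- basic facts about arctan
  have harctan_nonneg : ∀ u : ℝ, 0 ≤ u → 0 ≤ Real.arctan u := by
    intro u hu
    have := Real.arctan_strictMono.monotone hu
    rwa [Real.arctan_zero] at this
  have harctan_le : ∀ u : ℝ, 0 ≤ u → Real.arctan u ≤ u := by
    intro u hu
    have h1 : Real.arctan u ≤ Real.tan (Real.arctan u) :=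
      Real.le_tan (harctan_nonneg u hu) (Real.arctan_lt_pi_div_two u)
    rwa [Real.tan_arctan] at h1
  -- candidate derivative of ψ
  set g : ℝ → ℝ := fun x => 1 - 1/(1 + (π/2 * (max x 0 / ε))^2) with hg
  have hgcont : Continuous g := by
    apply continuous_const.sub
    apply continuous_const.div
    · fun_prop
    · intro x; positivity
  have hg0 : ∀ x ≤ (0:ℝ), g x = 0 := by
    intro x hx
    simp [hg, max_eq_right hx]
  have hgmem : ∀ x, 0 ≤ g x ∧ g x ≤ 1 := by
    intro x
    have h1 : (0:ℝ) < 1 + (π/2 * (max x 0 / ε))^2 := by positivity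
    constructor
    · have h2 : 1/(1 + (π/2 * (max x 0 / ε))^2) ≤ 1 := by
        rw [div_le_one h1]; nlinarith [sq_nonneg (π/2 * (max x 0/ε))]
      simp only [hg]; linarith
    · have h2 : 0 ≤ 1/(1 + (π/2 * (max x 0 / ε))^2) := by positivity
      simp only [hg]; linarith
  -- the smooth formula
  have hF : ∀ x : ℝ, HasDerivAt (fun y => y - (2/π)*ε*Real.arctan (π/2*(y/ε)))
      (1 - 1/(1 + (π/2*(x/ε))^2)) x := by
    intro x
    have h1 : HasDerivAt (fun y : ℝ => π/2*(y/ε)) (π/2*(1/ε)) x := by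
      simpa using ((hasDerivAt_id x).div_const ε).const_mul (π/2)
    have h2 : HasDerivAt (fun y => Real.arctan (π/2*(y/ε)))
        ((1/(1+(π/2*(x/ε))^2)) * (π/2*(1/ε))) x :=
      (Real.hasDerivAt_arctan _).comp x h1
    have h3 := (hasDerivAt_id x).sub (h2.const_mul ((2/π)*ε))
    convert h3 using 1
    · rfl
    · rfl
    · rfl
    have hd : (0:ℝ) < 1+(π/2*(x/ε))^2 := by positivity
    field_simp
  have hψd : ∀ x, HasDerivAt ψ (g x) x := by
    intro x
    rcases lt_trichotomy x 0 with hx | rfl | hx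
    · have hev : ψ =ᶠ[nhds x] fun _ => (0:ℝ) := by
        filter_upwards [Iio_mem_nhds hx] with y hy
        exact hψ0 y (le_of_lt hy)
      have h1 : HasDerivAt ψ 0 x :=
        (hasDerivAt_const x (0:ℝ)).congr_of_eventuallyEq hev
      simpa [hg0 x (le_of_lt hx)] using h1
    · have hle : HasDerivWithinAt ψ 0 (Set.Iic 0) 0 := by
        refine (hasDerivWithinAt_const (0:ℝ) (Set.Iic (0:ℝ)) (0:ℝ)).congr ?_ ?_
        · intro y hy; exact hψ0 y hy
        · exact hψ0 0 le_rfl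
      have hge : HasDerivWithinAt ψ 0 (Set.Ici 0) 0 := by
        have h1 := (hF 0).hasDerivWithinAt (s := Set.Ici (0:ℝ))
        have h2 : (1:ℝ) - 1/(1 + (π/2*((0:ℝ)/ε))^2) = 0 := by norm_num
        rw [h2] at h1
        refine h1.congr ?_ ?_
        · intro y hy; exact hψ1 y hy
        · exact hψ1 0 le_rfl
      have h3 := hle.union hge
      rw [Set.Iic_union_Ici] at h3
      have h4 := h3.hasDerivAt (by simp)
      simpa [hg0 0 le_rfl] using h4
    · have hev : ψ =ᶠ[nhds x] fun y => y - (2/π)*ε*Real.arctan (π/2*(y/ε)) := by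
        filter_upwards [Ioi_mem_nhds hx] with y hy
        exact hψ1 y (le_of_lt hy)
      have h1 := (hF x).congr_of_eventuallyEq hev
      have h2 : g x = 1 - 1/(1 + (π/2*(x/ε))^2) := by
        rw [hg]; simp [max_eq_left (le_of_lt hx)]
      rw [h2]; exact h1
  have hψdiff : Differentiable ℝ ψ := fun x => (hψd x).differentiableAt
  have hψderiv : deriv ψ = g := funext fun x => (hψd x).deriv
  have hψC1 : ContDiff ℝ 1 ψ := by
    rw [contDiff_one_iff_deriv]
    exact ⟨hψdiff, hψderiv ▸ hgcont⟩
  have hγeq : γ = fun t => ψ (c t - ε) := funext hγ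
  have hγC1 : ContDiffOn ℝ 1 γ (Set.Icc 0 T) := by
    rw [hγeq]
    exact hψC1.comp_contDiffOn (hc1.sub contDiffOn_const)
  -- pointwise bounds on ψ
  have hψbounds : ∀ x : ℝ, 0 ≤ ψ x ∧ ψ x ≤ max x 0 ∧ max x 0 - ψ x ≤ ε := by
    intro x
    rcases le_or_gt x 0 with hx | hx
    · rw [hψ0 x hx, max_eq_right hx]
      exact ⟨le_rfl, le_rfl, by linarith⟩
    · rw [hψ1 x (le_of_lt hx), max_eq_left (le_of_lt hx)]
      set u : ℝ := π/2*(x/ε) with hu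
      have hu0 : 0 ≤ u := by rw [hu]; positivity
      have h1 : 0 ≤ Real.arctan u := harctan_nonneg u hu0
      have h2 : Real.arctan u ≤ u := harctan_le u hu0
      have h3 : Real.arctan u ≤ π/2 := (Real.arctan_lt_pi_div_two u).le
      have hkey : (2/π)*ε*u = x := by rw [hu]; field_simp
      refine ⟨?_, ?_, ?_⟩
      · have : (2/π)*ε*Real.arctan u ≤ (2/π)*ε*u := by
          apply mul_le_mul_of_nonneg_left h2; positivity
        rw [hkey] at this; linarith
      · have : 0 ≤ (2/π)*ε*Real.arctan u := by positivity
        linarith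
      · have : (2/π)*ε*Real.arctan u ≤ (2/π)*ε*(π/2) := by
          apply mul_le_mul_of_nonneg_left h3; positivity
        have he : (2/π)*ε*(π/2) = ε := by field_simp
        rw [he] at this; linarith
  -- derivative bounds
  have hUD : UniqueDiffOn ℝ (Set.Icc (0:ℝ) T) := uniqueDiffOn_Icc hT
  have hcdiffOn : DifferentiableOn ℝ c (Set.Icc 0 T) := hc1.differentiableOn one_ne_zero
  set d : ℝ → ℝ := fun t => derivWithin c (Set.Icc 0 T) t with hd
  have hdcont : ContinuousOn d (Set.Icc 0 T) :=
    hc1.continuousOn_derivWithin hUD le_rfl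
  have hKd : ∀ t ∈ Set.Icc (0:ℝ) T, |d t| ≤ K * c t ^ β := by
    intro t ht
    have htcl : t ∈ closure (Set.Ioo (0:ℝ) T) := by
      rw [closure_Ioo hT.ne]; exact ht
    have hne : (nhdsWithin t (Set.Ioo (0:ℝ) T)).NeBot :=
      mem_closure_iff_nhdsWithin_neBot.mp htcl
    have h1 : Filter.Tendsto (fun s => |d s|) (nhdsWithin t (Set.Ioo (0:ℝ) T)) (nhds |d t|) :=
      ((hdcont t ht).mono Set.Ioo_subset_Icc_self).abs
    have h2 : Filter.Tendsto (fun s => K * c s ^ β) (nhdsWithin t (Set.Ioo (0:ℝ) T))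
        (nhds (K * c t ^ β)) := by
      apply Filter.Tendsto.const_mul
      have hcc : ContinuousWithinAt c (Set.Ioo 0 T) t :=
        (hc1.continuousOn t ht).mono Set.Ioo_subset_Icc_self
      exact (Real.continuousAt_rpow_const (c t) β (Or.inr hβpos.le)).comp_continuousWithinAt hcc
    refine le_of_tendsto_of_tendsto h1 h2 ?_
    filter_upwards [self_mem_nhdsWithin] with s hs
    have hs' : s ∈ Set.Icc (0:ℝ) T := Set.Ioo_subset_Icc_self hs
    have hdiffat : DifferentiableAt ℝ c s :=
      (hcdiffOn s hs').differentiableAt (Icc_mem_nhds hs.1 hs.2)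
    have hds : d s = deriv c s := hdiffat.derivWithin (hUD s hs')
    rw [hds]
    exact hK s hs'
  have hDγ : ∀ t ∈ Set.Icc (0:ℝ) T,
      HasDerivWithinAt γ (g (c t - ε) * d t) (Set.Icc 0 T) t := by
    intro t ht
    have h1 : HasDerivWithinAt (fun s => c s - ε) (d t) (Set.Icc 0 T) t :=
      ((hcdiffOn t ht).hasDerivWithinAt).sub_const ε
    have h2 := (hψd (c t - ε)).comp_hasDerivWithinAt t h1
    rw [hγeq]
    exact h2
  have hRHSnn : ∀ t ∈ Set.Icc (0:ℝ) T, 0 ≤ K * c t * ε ^ (-δ) := by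
    intro t ht
    rcases eq_or_lt_of_le (hc0 t ht) with h0 | h0
    · rw [← h0]; simp
    · have hK0 : 0 ≤ K := by
        have h1 := (abs_nonneg (deriv c t)).trans (hK t ht)
        have h2 : 0 < c t ^ ((1:ℝ) - 1/(1+α)) := Real.rpow_pos_of_pos h0 _
        nlinarith
      exact mul_nonneg (mul_nonneg hK0 (hc0 t ht)) (Real.rpow_nonneg hε.le _)
  refine ⟨hγC1, ?_, ?_, ?_⟩
  · intro t ht
    obtain ⟨h1, h2, _⟩ := hψbounds (c t - ε)
    rw [hγ t]
    refine ⟨h1, h2.trans ?_⟩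
    rcases le_total (c t - ε) 0 with h | h
    · rw [max_eq_right h]; exact hc0 t ht
    · rw [max_eq_left h]; linarith
  · intro t ht
    obtain ⟨h1, h2, h3⟩ := hψbounds (c t - ε)
    rw [hγ t, abs_le]
    rcases le_total (c t - ε) 0 with h | h
    · rw [max_eq_right h] at h2 h3
      rw [hψ0 _ h]
      constructor
      · linarith [hc0 t ht]
      · linarith
    · rw [max_eq_left h] at h2 h3
      constructor
      · linarith
      · linarith
  · intro t ht
    have hrhs := hRHSnn t ht
    by_cases hdiff : DifferentiableAt ℝ γ t
    · have h1 : deriv γ t = g (c t - ε) * d t := by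
        rw [← hdiff.derivWithin (hUD t ht)]
        exact (hDγ t ht).derivWithin (hUD t ht)
      rw [h1]
      rcases le_or_gt (c t) ε with hle | hlt
      · rw [hg0 _ (by linarith), zero_mul, abs_zero]
        exact hrhs
      · have hct0 : 0 < c t := lt_trans hε hlt
        have hK0 : 0 ≤ K := by
          have ha := (abs_nonneg (deriv c t)).trans (hK t ht)
          have hb : 0 < c t ^ ((1:ℝ) - 1/(1+α)) := Real.rpow_pos_of_pos hct0 _
          nlinarith
        obtain ⟨hga, hgb⟩ := hgmem (c t - ε)
        calc |g (c t - ε) * d t| ≤ |d t| := by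
              rw [abs_mul, abs_of_nonneg hga]
              nlinarith [abs_nonneg (d t)]
          _ ≤ K * c t ^ β := hKd t ht
          _ = K * (c t * c t ^ (-δ)) := by
              rw [hβdef, show (1:ℝ) - δ = 1 + (-δ) by ring, Real.rpow_add hct0,
                Real.rpow_one]
          _ ≤ K * (c t * ε ^ (-δ)) := by
              apply mul_le_mul_of_nonneg_left _ hK0
              apply mul_le_mul_of_nonneg_left _ hct0.le
              exact Real.rpow_le_rpow_of_nonpos hε hlt.le (by linarith)
          _ = K * c t * ε ^ (-δ) := by ring
    · rw [deriv_zero_of_not_differentiableAt hdiff, abs_zero]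
      exact hrhs
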